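/- Let U ⊆ ℝˡ be an open convex set and let C : U → Mₙ(ℝ) be continuously differentiable such that for every φ ∈ U, C(φ) is symmetric with eigenvalues bounded below by λ_min > 0 and ‖∂C/∂φⱼ(φ)‖_F ≤ M for all j = 1, …, l; moreover assume ‖C(φ) − C(φ')‖₂ ≤ L_φ ‖φ − φ'‖₂ for all φ, φ' ∈ U. Let Y ∈ ℝⁿ, let B be a real n×L matrix with ‖B‖₂ ≤ B*, let R > 0, and define the log-likelihood ℓ(β, φ) = −½ log det C(φ) − ½ (Y − Bβ)ᵀ C(φ)⁻¹ (Y − Bβ). Then for all φ, φ' ∈ U and all β, β' ∈ ℝᴸ with ‖β‖₂ ≤ R and ‖β'‖₂ ≤ R: |ℓ(β, φ) − ℓ(β', φ')| ≤ [ ½ · M √(n l) / λ_min + ½ · 𝓛(Y) ] · ‖(β, φ) − (β', φ')‖₂, where 𝓛(Y) = √2 · max{ (L_φ / λ_min²) · ( ‖Y‖₂² + 2 B* R ‖Y‖₂ + (B* R)² ), (B* / λ_min) · ( 2‖Y‖₂ + 2 B* R ) } and ‖(β, φ) − (β', φ')‖₂ = √(‖β − β'‖₂² + ‖φ − φ'‖₂²).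 -/

import Mathlib

open Matrix

/-- The Euclidean norm `‖x‖₂ = √(Σᵢ xᵢ²)` of a vector `x ∈ ℝⁿ`. -/
noncomputable def vnorm {n : ℕ} (x : Fin n → ℝ) : ℝ :=
  Real.sqrt (∑ i, (x i) ^ 2)

/-- The Frobenius norm `‖A‖_F = √(tr(Aᵀ A))` of a real `n × n` matrix. -/
noncomputable def frobNorm {n : ℕ} (A : Matrix (Fin n) (Fin n) ℝ) : ℝ :=
  Real.sqrt (Matrix.trace (Aᵀ * A))

/-- The spectral (operator ℓ²) norm of a real `m × n` matrix: the operator norm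
of the induced linear map between Euclidean spaces. -/
noncomputable def specNorm {m n : ℕ} (A : Matrix (Fin m) (Fin n) ℝ) : ℝ :=
  ‖LinearMap.toContinuousLinearMap (Matrix.toEuclideanLin A)‖

/-- The entrywise partial derivative `∂C/∂φⱼ` of a matrix-valued map
`C : ℝˡ → Mₙ(ℝ)` in the `j`-th coordinate, at the point `φ`. -/
noncomputable def partialDeriv {l n : ℕ}
    (C : (Fin l → ℝ) → Matrix (Fin n) (Fin n) ℝ) (j : Fin l) (φ : Fin l → ℝ) :
    Matrix (Fin n) (Fin n) ℝ :=
  Matrix.of fun i k => fderiv ℝ (fun ψ => C ψ i k) φ (Pi.single j 1)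

/-- The per-study Gaussian-process log-likelihood
`ℓ(β, φ) = −½ log det C(φ) − ½ (Y − Bβ)ᵀ C(φ)⁻¹ (Y − Bβ)`. -/
noncomputable def logLik {n L l : ℕ} (Y : Fin n → ℝ)
    (B : Matrix (Fin n) (Fin L) ℝ) (C : (Fin l → ℝ) → Matrix (Fin n) (Fin n) ℝ)
    (β : Fin L → ℝ) (φ : Fin l → ℝ) : ℝ :=
  -(1 / 2) * Real.log ((C φ).det) -
    (1 / 2) * ((Y - B.mulVec β) ⬝ᵥ (C φ)⁻¹.mulVec (Y - B.mulVec β))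

/-- The stochastic Lipschitz coefficient `𝓛(Y)` on the parameter ball of radius `R`:
`𝓛(Y) = √2 · max{ (L_φ/λ_min²)(‖Y‖² + 2B*R‖Y‖ + (B*R)²), (B*/λ_min)(2‖Y‖ + 2B*R) }`. -/
noncomputable def stochLipCoeff {n : ℕ} (Y : Fin n → ℝ)
    (Bstar R lmin Lphi : ℝ) : ℝ :=
  Real.sqrt 2 *
    max ((Lphi / lmin ^ 2) * (vnorm Y ^ 2 + 2 * Bstar * R * vnorm Y + (Bstar * R) ^ 2))
      ((Bstar / lmin) * (2 * vnorm Y + 2 * Bstar * R))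

lemma vnorm_nonneg {n : ℕ} (x : Fin n → ℝ) : 0 ≤ vnorm x := Real.sqrt_nonneg _

lemma vnorm_eq_norm {n : ℕ} (x : Fin n → ℝ) :
    vnorm x = ‖(WithLp.equiv 2 (Fin n → ℝ)).symm x‖ := by
  rw [EuclideanSpace.norm_eq]
  simp only [WithLp.equiv_symm_apply, PiLp.toLp_apply, WithLp.ofLp_toLp, Real.norm_eq_abs, sq_abs, vnorm]

lemma sq_vnorm {n : ℕ} (x : Fin n → ℝ) : vnorm x ^ 2 = ∑ i, (x i) ^ 2 :=
  Real.sq_sqrt (Finset.sum_nonneg fun _ _ => sq_nonneg _)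

lemma specNorm_nonneg {m n : ℕ} (A : Matrix (Fin m) (Fin n) ℝ) : 0 ≤ specNorm A :=
  norm_nonneg _

lemma vnorm_mulVec_le {m n : ℕ} (A : Matrix (Fin m) (Fin n) ℝ) (x : Fin n → ℝ) :
    vnorm (A.mulVec x) ≤ specNorm A * vnorm x := by
  rw [vnorm_eq_norm, vnorm_eq_norm, WithLp.equiv_symm_apply, ← Matrix.toEuclideanLin_apply_piLp_toLp]
  exact (LinearMap.toContinuousLinearMap (Matrix.toEuclideanLin A)).le_opNorm _

lemma specNorm_le_bound {m n : ℕ} (A : Matrix (Fin m) (Fin n) ℝ) {c : ℝ} (hc : 0 ≤ c)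
    (h : ∀ x, vnorm (A.mulVec x) ≤ c * vnorm x) : specNorm A ≤ c := by
  refine ContinuousLinearMap.opNorm_le_bound _ hc fun x => ?_
  have := h ((WithLp.equiv 2 (Fin n → ℝ)) x)
  rwa [vnorm_eq_norm, vnorm_eq_norm, (WithLp.equiv 2 (Fin n → ℝ)).symm_apply_apply,
    WithLp.equiv_symm_apply, WithLp.equiv_apply, ← Matrix.toEuclideanLin_apply_piLp_toLp, WithLp.toLp_ofLp]
    at this

lemma abs_dotProduct_le {n : ℕ} (x y : Fin n → ℝ) :
    |x ⬝ᵥ y| ≤ vnorm x * vnorm y := by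
  have h := Finset.sum_mul_sq_le_sq_mul_sq Finset.univ x y
  calc |x ⬝ᵥ y| = Real.sqrt ((∑ i, x i * y i) ^ 2) := (Real.sqrt_sq_eq_abs _).symm
    _
      ≤ Real.sqrt ((∑ i, x i ^ 2) * ∑ i, y i ^ 2) := Real.sqrt_le_sqrt h
    _ = vnorm x * vnorm y := by
        rw [Real.sqrt_mul (Finset.sum_nonneg fun _ _ => sq_nonneg _)]; rfl

lemma vnorm_add_le {n : ℕ} (x y : Fin n → ℝ) : vnorm (x + y) ≤ vnorm x + vnorm y := by
  rw [vnorm_eq_norm x, vnorm_eq_norm y, vnorm_eq_norm (x + y)]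
  exact norm_add_le _ _

lemma vnorm_sub_le {n : ℕ} (x y : Fin n → ℝ) : vnorm (x - y) ≤ vnorm x + vnorm y := by
  rw [vnorm_eq_norm x, vnorm_eq_norm y, vnorm_eq_norm (x - y)]
  exact norm_sub_le _ _

lemma trace_transpose_mul_self {n : ℕ} (A : Matrix (Fin n) (Fin n) ℝ) :
    Matrix.trace (Aᵀ * A) = ∑ p : Fin n × Fin n, (A p.1 p.2) ^ 2 := by
  rw [Matrix.trace, Fintype.sum_prod_type]
  simp only [Matrix.diag_apply, Matrix.mul_apply, Matrix.transpose_apply, sq]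
  rw [Finset.sum_comm]

lemma frobNorm_eq {n : ℕ} (A : Matrix (Fin n) (Fin n) ℝ) :
    frobNorm A = Real.sqrt (∑ p : Fin n × Fin n, (A p.1 p.2) ^ 2) := by
  rw [frobNorm, trace_transpose_mul_self]

lemma frobNorm_nonneg {n : ℕ} (A : Matrix (Fin n) (Fin n) ℝ) : 0 ≤ frobNorm A :=
  Real.sqrt_nonneg _

lemma abs_trace_mul_le {n : ℕ} (A B : Matrix (Fin n) (Fin n) ℝ) :
    |Matrix.trace (A * B)| ≤ frobNorm A * frobNorm B := by
  have htr : Matrix.trace (A * B) = ∑ p : Fin n × Fin n, A p.1 p.2 * B p.2 p.1 := by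
    rw [Matrix.trace, Fintype.sum_prod_type]
    simp only [Matrix.diag_apply, Matrix.mul_apply]
  have h := Finset.sum_mul_sq_le_sq_mul_sq Finset.univ
    (fun p : Fin n × Fin n => A p.1 p.2) (fun p : Fin n × Fin n => B p.2 p.1)
  rw [htr, frobNorm_eq, frobNorm_eq]
  calc |∑ p : Fin n × Fin n, A p.1 p.2 * B p.2 p.1|
      = Real.sqrt ((∑ p : Fin n × Fin n, A p.1 p.2 * B p.2 p.1) ^ 2) :=
        (Real.sqrt_sq_eq_abs _).symm
    _ ≤ Real.sqrt ((∑ p : Fin n × Fin n, A p.1 p.2 ^ 2) *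
          ∑ p : Fin n × Fin n, B p.2 p.1 ^ 2) := Real.sqrt_le_sqrt h
    _ = _ := by
        rw [Real.sqrt_mul (Finset.sum_nonneg fun _ _ => sq_nonneg _)]
        congr 2
        exact Fintype.sum_equiv (Equiv.prodComm _ _) _ _ (fun p => rfl)

lemma vnorm_single_one {n : ℕ} (k : Fin n) : vnorm (Pi.single k 1 : Fin n → ℝ) = 1 := by
  have : ∑ i, (Pi.single k 1 : Fin n → ℝ) i ^ 2 = 1 := by
    rw [Finset.sum_eq_single k]
    · simp
    · intro i _ hik; simp [Pi.single_apply, hik]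
    · simp
  rw [vnorm, this, Real.sqrt_one]

lemma frobNorm_le_sqrt_mul_specNorm {n : ℕ} (A : Matrix (Fin n) (Fin n) ℝ) :
    frobNorm A ≤ Real.sqrt n * specNorm A := by
  have hcol : ∀ k : Fin n, ∑ i, (A i k) ^ 2 ≤ specNorm A ^ 2 := by
    intro k
    have h1 : vnorm (A.mulVec (Pi.single k 1)) ≤ specNorm A := by
      have := vnorm_mulVec_le A (Pi.single k 1)
      rwa [vnorm_single_one, mul_one] at this
    have h2 : (A.mulVec (Pi.single k 1)) = fun i => A i k := by
      rw [Matrix.mulVec_single_one]; rfl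
    have := sq_le_sq' (by nlinarith [vnorm_nonneg (A.mulVec (Pi.single k 1))]) h1
    rw [sq_vnorm, h2] at this
    simpa using this
  rw [frobNorm_eq]
  have : ∑ p : Fin n × Fin n, (A p.1 p.2) ^ 2 ≤ n * specNorm A ^ 2 := by
    rw [Fintype.sum_prod_type_right]
    calc ∑ k, ∑ i, A i k ^ 2 ≤ ∑ _k : Fin n, specNorm A ^ 2 :=
          Finset.sum_le_sum fun k _ => hcol k
      _ = n * specNorm A ^ 2 := by rw [Finset.sum_const]; simp [mul_comm]
  calc Real.sqrt (∑ p : Fin n × Fin n, A p.1 p.2 ^ 2)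
      ≤ Real.sqrt (n * specNorm A ^ 2) := Real.sqrt_le_sqrt this
    _ = Real.sqrt n * specNorm A := by
        rw [Real.sqrt_mul (Nat.cast_nonneg n), Real.sqrt_sq (specNorm_nonneg A)]

section
variable {n : ℕ} {lmin : ℝ} {A : Matrix (Fin n) (Fin n) ℝ}

lemma quad_lower (hl : 0 < lmin) (hpsd : (A - lmin • (1 : Matrix (Fin n) (Fin n) ℝ)).PosSemidef)
    (x : Fin n → ℝ) : lmin * vnorm x ^ 2 ≤ x ⬝ᵥ A.mulVec x := by
  have h := hpsd.dotProduct_mulVec_nonneg x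
  have hstar : (star x : Fin n → ℝ) = x := by simp
  rw [hstar, Matrix.sub_mulVec, dotProduct_sub, Matrix.smul_mulVec,
    Matrix.one_mulVec, dotProduct_smul] at h
  have hxx : x ⬝ᵥ x = vnorm x ^ 2 := by rw [sq_vnorm]; simp [dotProduct, sq]
  rw [hxx, smul_eq_mul] at h
  linarith [h]

lemma posDef_of (hl : 0 < lmin) (hpsd : (A - lmin • (1 : Matrix (Fin n) (Fin n) ℝ)).PosSemidef)
    (hsymm : A.IsSymm) : A.PosDef := by
  refine Matrix.PosDef.of_dotProduct_mulVec_pos ?_ fun x hx => ?_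
  · rw [Matrix.IsHermitian]; ext i j
    have := congrFun (congrFun hsymm.eq i) j
    simpa [Matrix.conjTranspose, Matrix.transpose_apply] using this
  · have h := quad_lower hl hpsd x
    have hstar : (star x : Fin n → ℝ) = x := by simp
    rw [hstar]
    have hvx : 0 < vnorm x ^ 2 := by
      rw [sq_vnorm]
      have : ∃ i, x i ≠ 0 := by
        by_contra hc
        push_neg at hc
        exact hx (funext hc)
      obtain ⟨i, hi⟩ := this
      exact Finset.sum_pos' (fun j _ => sq_nonneg _) ⟨i, Finset.mem_univ i, by positivity⟩
    calc (0:ℝ) < lmin * vnorm x ^ 2 := by positivity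
      _ ≤ _ := h
  
lemma inv_mul_cancel_of_posDef (hA : A.PosDef) : A * A⁻¹ = 1 :=
  Matrix.mul_nonsing_inv _ hA.det_pos.ne'.isUnit

end

section
variable {n : ℕ} {lmin : ℝ} {A : Matrix (Fin n) (Fin n) ℝ}

lemma specNorm_inv_le (hl : 0 < lmin)
    (hpsd : (A - lmin • (1 : Matrix (Fin n) (Fin n) ℝ)).PosSemidef) (hsymm : A.IsSymm) :
    specNorm A⁻¹ ≤ 1 / lmin := by
  refine specNorm_le_bound _ (by positivity) fun y => ?_
  set x := A⁻¹.mulVec y with hx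
  have hAx : A.mulVec x = y := by
    rw [hx, Matrix.mulVec_mulVec, inv_mul_cancel_of_posDef (posDef_of hl hpsd hsymm),
      Matrix.one_mulVec]
  have h1 : lmin * vnorm x ^ 2 ≤ x ⬝ᵥ A.mulVec x := quad_lower hl hpsd x
  have h2 : x ⬝ᵥ A.mulVec x ≤ vnorm x * vnorm y := by
    rw [hAx]
    exact (le_abs_self _).trans (abs_dotProduct_le x y)
  have hvx := vnorm_nonneg x
  have hvy := vnorm_nonneg y
  rcases eq_or_lt_of_le hvx with h0 | h0
  · rw [← h0]; positivity
  · rw [div_mul_eq_mul_div, le_div_iff₀ hl]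
    nlinarith
end


-- derivative of t ↦ det (M t)
lemma hasDerivAt_det {n : ℕ} {M : ℝ → Matrix (Fin n) (Fin n) ℝ}
    {D : Matrix (Fin n) (Fin n) ℝ} {t0 : ℝ}
    (hM : ∀ i k, HasDerivAt (fun t => M t i k) (D i k) t0) :
    HasDerivAt (fun t => (M t).det) (Matrix.trace (Matrix.adjugate (M t0) * D)) t0 := by
  have h1 : ∀ σ : Equiv.Perm (Fin n),
      HasDerivAt (fun t => ∏ i, M t (σ i) i)
        (∑ i, (∏ j ∈ Finset.univ.erase i, M t0 (σ j) j) • D (σ i) i) t0 :=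
    fun σ => HasDerivAt.fun_finsetProd (fun i _ => hM (σ i) i)
  have h2 : HasDerivAt (fun t => ∑ σ : Equiv.Perm (Fin n),
        ((Equiv.Perm.sign σ : ℤ) : ℝ) * ∏ i, M t (σ i) i)
      (∑ σ : Equiv.Perm (Fin n), ((Equiv.Perm.sign σ : ℤ) : ℝ) *
        ∑ i, (∏ j ∈ Finset.univ.erase i, M t0 (σ j) j) • D (σ i) i) t0 :=
    HasDerivAt.fun_sum (fun σ _ => (h1 σ).const_mul _)
  have hfun : (fun t => (M t).det) = (fun t => ∑ σ : Equiv.Perm (Fin n),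
      ((Equiv.Perm.sign σ : ℤ) : ℝ) * ∏ i, M t (σ i) i) := by
    funext t; rw [Matrix.det_apply']
  rw [hfun]
  convert h2 using 1
  -- algebraic identity
  have key : ∀ i : Fin n, (Matrix.adjugate (M t0) * D) i i
      = ∑ σ : Equiv.Perm (Fin n), ((Equiv.Perm.sign σ : ℤ) : ℝ) *
          ((∏ j ∈ Finset.univ.erase i, M t0 (σ j) j) * D (σ i) i) := by
    intro i
    have hc : (Matrix.adjugate (M t0) * D) i i
        = ((M t0).updateCol i (fun r => D r i)).det := by
      rw [← Matrix.cramer_apply]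
      have hsingle : ∀ r : Fin n, (fun j => if r = j then (1:ℝ) else 0) = Pi.single r 1 := by
        intro r; funext j; simp [Pi.single_apply, eq_comm]
      have : (fun r => D r i) = ∑ r : Fin n, D r i • (Pi.single r 1 : Fin n → ℝ) := by
        have := pi_eq_sum_univ (fun r => D r i)
        simpa only [hsingle] using this
      rw [this, map_sum]
      simp only [_root_.map_smul]
      rw [Matrix.mul_apply, Finset.sum_apply]
      refine Finset.sum_congr rfl fun r _ => ?_
      have hcr : Matrix.cramer (M t0) (Pi.single r 1) i = Matrix.adjugate (M t0) i r := by
        have h3 : Matrix.adjugate ((M t0)ᵀ) = Matrix.of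
            (fun i => Matrix.cramer (M t0) (Pi.single i 1)) := by
          rw [Matrix.adjugate_def, Matrix.transpose_transpose]
        have h4 : Matrix.adjugate ((M t0)ᵀ) r i = Matrix.cramer (M t0) (Pi.single r 1) i := by
          rw [h3]; rfl
        rw [← h4, ← Matrix.adjugate_transpose, Matrix.transpose_apply]
      rw [Pi.smul_apply, hcr, smul_eq_mul, mul_comm]
    rw [hc, Matrix.det_apply']
    refine Finset.sum_congr rfl fun σ _ => ?_
    congr 1
    have hprod : ∀ j : Fin n, ((M t0).updateCol i (fun r => D r i)) (σ j) j
        = if j = i then D (σ j) i else M t0 (σ j) j := by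
      intro j
      rw [Matrix.updateCol_apply]
    calc ∏ j, ((M t0).updateCol i (fun r => D r i)) (σ j) j
        = ∏ j, (if j = i then D (σ j) i else M t0 (σ j) j) :=
          Finset.prod_congr rfl fun j _ => hprod j
      _ = (if i = i then D (σ i) i else M t0 (σ i) i) *
            ∏ j ∈ Finset.univ.erase i, (if j = i then D (σ j) i else M t0 (σ j) j) :=
          (Finset.mul_prod_erase Finset.univ _ (Finset.mem_univ i)).symm
      _ = (∏ j ∈ Finset.univ.erase i, M t0 (σ j) j) * D (σ i) i := by
          rw [if_pos rfl, mul_comm]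
          congr 1
          refine Finset.prod_congr rfl fun j hj => ?_
          rw [if_neg (Finset.ne_of_mem_erase hj)]
  rw [Matrix.trace]
  simp only [Matrix.diag_apply]
  rw [Finset.sum_congr rfl (fun i _ => key i), Finset.sum_comm]
  refine Finset.sum_congr rfl fun σ _ => ?_
  rw [Finset.mul_sum]
  refine Finset.sum_congr rfl fun i _ => ?_
  rw [smul_eq_mul]

lemma logdet_diff_bound {n l : ℕ} (U : Set (Fin l → ℝ))
    (hUopen : IsOpen U) (hUconv : Convex ℝ U)
    (C : (Fin l → ℝ) → Matrix (Fin n) (Fin n) ℝ)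
    (hC : ∀ i k, ContDiffOn ℝ 1 (fun φ => C φ i k) U)
    {lmin M : ℝ} (hl : 0 < lmin)
    (hsymm : ∀ φ ∈ U, (C φ).IsSymm)
    (hpsd : ∀ φ ∈ U, (C φ - lmin • (1 : Matrix (Fin n) (Fin n) ℝ)).PosSemidef)
    (hM : ∀ φ ∈ U, ∀ j, frobNorm (partialDeriv C j φ) ≤ M)
    {φ φ' : Fin l → ℝ} (hφ : φ ∈ U) (hφ' : φ' ∈ U) :
    |Real.log (C φ).det - Real.log (C φ').det| ≤
      M * Real.sqrt ((n : ℝ) * l) / lmin * vnorm (φ - φ') := by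
  set Δ : Fin l → ℝ := φ - φ' with hΔ
  set ψ : ℝ → (Fin l → ℝ) := fun t => φ' + t • Δ with hψ
  have hψmem : ∀ t ∈ Set.Icc (0:ℝ) 1, ψ t ∈ U := by
    intro t ht
    have := hUconv hφ' hφ (by linarith [ht.2] : (0:ℝ) ≤ 1 - t) ht.1 (by ring)
    convert this using 1
    simp only [hψ, hΔ]
    module
  -- entrywise derivative at each t
  have hentry : ∀ t ∈ Set.Icc (0:ℝ) 1, ∀ i k,
      HasDerivAt (fun s => C (ψ s) i k) (fderiv ℝ (fun φ => C φ i k) (ψ t) Δ) t := by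
    intro t ht i k
    have hdiff : DifferentiableAt ℝ (fun φ => C φ i k) (ψ t) :=
      ((hC i k).contDiffAt (hUopen.mem_nhds (hψmem t ht))).differentiableAt one_ne_zero
    have hψd : HasDerivAt ψ Δ t := by
      have h1 : HasDerivAt (fun s : ℝ => s • Δ) ((1:ℝ) • Δ) t := (hasDerivAt_id t).smul_const Δ
      simpa [hψ] using h1.const_add φ'
    exact hdiff.hasFDerivAt.comp_hasDerivAt t hψd
  -- the directional derivative matrix
  set Dm : ℝ → Matrix (Fin n) (Fin n) ℝ :=
    fun t => Matrix.of fun i k => fderiv ℝ (fun φ => C φ i k) (ψ t) Δ with hDm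
  have hDsum : ∀ t ∈ Set.Icc (0:ℝ) 1, Dm t = ∑ j, Δ j • partialDeriv C j (ψ t) := by
    intro t ht
    ext i k
    have hdiff : DifferentiableAt ℝ (fun φ => C φ i k) (ψ t) :=
      ((hC i k).contDiffAt (hUopen.mem_nhds (hψmem t ht))).differentiableAt one_ne_zero
    have hsingle : ∀ r : Fin l, (fun j => if r = j then (1:ℝ) else 0) = Pi.single r 1 := by
      intro r; funext j; simp [Pi.single_apply, eq_comm]
    have hΔsum : Δ = ∑ j : Fin l, Δ j • (Pi.single j 1 : Fin l → ℝ) := by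
      have := pi_eq_sum_univ Δ
      simpa only [hsingle] using this
    have : fderiv ℝ (fun φ => C φ i k) (ψ t) Δ
        = ∑ j : Fin l, Δ j • fderiv ℝ (fun φ => C φ i k) (ψ t) (Pi.single j 1) := by
      conv_lhs => rw [hΔsum]
      rw [map_sum]
      exact Finset.sum_congr rfl fun j _ => by rw [_root_.map_smul]
    simpa [hDm, partialDeriv, Matrix.sum_apply, Matrix.smul_apply, smul_eq_mul] using this
  -- determinant path, log path
  have hdetpos : ∀ t ∈ Set.Icc (0:ℝ) 1, 0 < (C (ψ t)).det :=
    fun t ht => (posDef_of hl (hpsd _ (hψmem t ht)) (hsymm _ (hψmem t ht))).det_pos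
  have hlog : ∀ t ∈ Set.Icc (0:ℝ) 1,
      HasDerivAt (fun s => Real.log ((C (ψ s)).det))
        (Matrix.trace ((C (ψ t))⁻¹ * Dm t)) t := by
    intro t ht
    have hdet : HasDerivAt (fun s => (C (ψ s)).det)
        (Matrix.trace (Matrix.adjugate (C (ψ t)) * Dm t)) t :=
      hasDerivAt_det (fun i k => hentry t ht i k)
    have := hdet.log (hdetpos t ht).ne'
    convert this using 1
    rw [Matrix.inv_def, Matrix.smul_mul, Matrix.trace_smul, Ring.inverse_eq_inv,
      smul_eq_mul, div_eq_mul_inv, mul_comm]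
  -- bound on the derivative
  have hbound : ∀ t ∈ Set.Icc (0:ℝ) 1,
      |Matrix.trace ((C (ψ t))⁻¹ * Dm t)| ≤ M * Real.sqrt ((n : ℝ) * l) / lmin * vnorm Δ := by
    intro t ht
    rcases Nat.eq_zero_or_pos l with hl0 | hlpos
    · subst hl0
      have : Δ = 0 := Subsingleton.elim _ _
      have hD0 : Dm t = 0 := by
        rw [hDsum t ht]
        simp
      rw [hD0, Matrix.mul_zero, Matrix.trace_zero, abs_zero, this]
      have : vnorm (0 : Fin 0 → ℝ) = 0 := by simp [vnorm]
      rw [this, mul_zero]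
    · -- M ≥ 0
      have hM0 : 0 ≤ M := le_trans (frobNorm_nonneg _) (hM φ hφ ⟨0, hlpos⟩)
      have htr : Matrix.trace ((C (ψ t))⁻¹ * Dm t)
          = ∑ j, Δ j * Matrix.trace ((C (ψ t))⁻¹ * partialDeriv C j (ψ t)) := by
        rw [hDsum t ht, Matrix.mul_sum, Matrix.trace_sum]
        refine Finset.sum_congr rfl fun j _ => ?_
        rw [Matrix.mul_smul, Matrix.trace_smul, smul_eq_mul]
      have hperj : ∀ j, |Matrix.trace ((C (ψ t))⁻¹ * partialDeriv C j (ψ t))|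
          ≤ Real.sqrt n / lmin * M := by
        intro j
        calc |Matrix.trace ((C (ψ t))⁻¹ * partialDeriv C j (ψ t))|
            ≤ frobNorm ((C (ψ t))⁻¹) * frobNorm (partialDeriv C j (ψ t)) :=
              abs_trace_mul_le _ _
          _ ≤ (Real.sqrt n * (1 / lmin)) * M := by
              refine mul_le_mul ?_ (hM _ (hψmem t ht) j) (frobNorm_nonneg _) (by positivity)
              calc frobNorm ((C (ψ t))⁻¹) ≤ Real.sqrt n * specNorm ((C (ψ t))⁻¹) :=
                    frobNorm_le_sqrt_mul_specNorm _
                _ ≤ Real.sqrt n * (1 / lmin) := by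
                    have := specNorm_inv_le hl (hpsd _ (hψmem t ht)) (hsymm _ (hψmem t ht))
                    exact mul_le_mul_of_nonneg_left this (Real.sqrt_nonneg _)
          _ = Real.sqrt n / lmin * M := by ring
      calc |Matrix.trace ((C (ψ t))⁻¹ * Dm t)|
          = |∑ j, Δ j * Matrix.trace ((C (ψ t))⁻¹ * partialDeriv C j (ψ t))| := by rw [htr]
        _ ≤ ∑ j, |Δ j * Matrix.trace ((C (ψ t))⁻¹ * partialDeriv C j (ψ t))| :=
            Finset.abs_sum_le_sum_abs _ _
        _ ≤ ∑ j, |Δ j| * (Real.sqrt n / lmin * M) := by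
            refine Finset.sum_le_sum fun j _ => ?_
            rw [abs_mul]
            exact mul_le_mul_of_nonneg_left (hperj j) (abs_nonneg _)
        _ = (∑ j, |Δ j|) * (Real.sqrt n / lmin * M) := by rw [Finset.sum_mul]
        _ ≤ (Real.sqrt l * vnorm Δ) * (Real.sqrt n / lmin * M) := by
            refine mul_le_mul_of_nonneg_right ?_ (by positivity)
            -- Cauchy-Schwarz : ∑ |Δ j| ≤ √l * vnorm Δ
            have h := Finset.sum_mul_sq_le_sq_mul_sq Finset.univ
              (fun _ : Fin l => (1:ℝ)) (fun j => |Δ j|)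
            have h1 : (∑ j, |Δ j|) ^ 2 ≤ (l : ℝ) * vnorm Δ ^ 2 := by
              have e1 : ∑ j : Fin l, (1:ℝ) * |Δ j| = ∑ j, |Δ j| := by simp
              have e2 : ∑ _j : Fin l, ((1:ℝ)) ^ 2 = (l : ℝ) := by simp
              have e3 : ∑ j : Fin l, |Δ j| ^ 2 = vnorm Δ ^ 2 := by
                rw [sq_vnorm]; exact Finset.sum_congr rfl fun j _ => sq_abs _
              rw [e1, e2, e3] at h
              exact h
            have h2 : (0:ℝ) ≤ ∑ j, |Δ j| := Finset.sum_nonneg fun j _ => abs_nonneg _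
            nlinarith [vnorm_nonneg Δ, Real.sq_sqrt (Nat.cast_nonneg l : (0:ℝ) ≤ l),
              Real.sqrt_nonneg l, mul_nonneg (Real.sqrt_nonneg l) (vnorm_nonneg Δ)]
        _ = M * Real.sqrt ((n : ℝ) * l) / lmin * vnorm Δ := by
            rw [Real.sqrt_mul (Nat.cast_nonneg n)]
            ring
  -- apply MVT on [0,1]
  have hmvt := norm_image_sub_le_of_norm_deriv_le_segment_01'
    (f := fun s => Real.log ((C (ψ s)).det))
    (f' := fun t => Matrix.trace ((C (ψ t))⁻¹ * Dm t))
    (C := M * Real.sqrt ((n : ℝ) * l) / lmin * vnorm Δ)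
    (fun t ht => (hlog t ht).hasDerivWithinAt)
    (fun t ht => by
      rw [Real.norm_eq_abs]
      exact hbound t (Set.Ico_subset_Icc_self ht))
  have hψ1 : ψ 1 = φ := by simp [hψ, hΔ]
  have hψ0 : ψ 0 = φ' := by simp [hψ]
  simp only [hψ1, hψ0, Real.norm_eq_abs] at hmvt
  exact hmvt

lemma vnorm_sub_comm {n : ℕ} (x y : Fin n → ℝ) : vnorm (x - y) = vnorm (y - x) := by
  unfold vnorm
  congr 1
  exact Finset.sum_congr rfl fun i _ => by
    simp only [Pi.sub_apply]; ring

lemma specNorm_mul_le {m n p : ℕ} (A : Matrix (Fin m) (Fin n) ℝ)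
    (B : Matrix (Fin n) (Fin p) ℝ) : specNorm (A * B) ≤ specNorm A * specNorm B := by
  refine specNorm_le_bound _ (mul_nonneg (specNorm_nonneg A) (specNorm_nonneg B)) fun x => ?_
  rw [← Matrix.mulVec_mulVec]
  calc vnorm (A.mulVec (B.mulVec x)) ≤ specNorm A * vnorm (B.mulVec x) := vnorm_mulVec_le _ _
    _ ≤ specNorm A * (specNorm B * vnorm x) :=
        mul_le_mul_of_nonneg_left (vnorm_mulVec_le _ _) (specNorm_nonneg A)
    _ = specNorm A * specNorm B * vnorm x := by ring

lemma quadform_abs_le {n : ℕ} (A : Matrix (Fin n) (Fin n) ℝ) (x y : Fin n → ℝ) :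
    |x ⬝ᵥ A.mulVec y| ≤ specNorm A * vnorm x * vnorm y := by
  calc |x ⬝ᵥ A.mulVec y| ≤ vnorm x * vnorm (A.mulVec y) := abs_dotProduct_le _ _
    _ ≤ vnorm x * (specNorm A * vnorm y) :=
        mul_le_mul_of_nonneg_left (vnorm_mulVec_le _ _) (vnorm_nonneg x)
    _ = specNorm A * vnorm x * vnorm y := by ring

lemma inv_sub_inv_matrix {n : ℕ} {A B : Matrix (Fin n) (Fin n) ℝ}
    (hA : A.PosDef) (hB : B.PosDef) :
    A⁻¹ - B⁻¹ = A⁻¹ * (B - A) * B⁻¹ := by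
  have hAl : A⁻¹ * A = 1 := Matrix.nonsing_inv_mul _ hA.det_pos.ne'.isUnit
  have hBr : B * B⁻¹ = 1 := inv_mul_cancel_of_posDef hB
  have expand : A⁻¹ * (B - A) * B⁻¹ = A⁻¹ * (B * B⁻¹) - (A⁻¹ * A) * B⁻¹ := by
    rw [Matrix.mul_sub, Matrix.sub_mul, Matrix.mul_assoc, Matrix.mul_assoc]
  rw [expand, hAl, hBr, Matrix.mul_one, Matrix.one_mul]

lemma quad_split2 {n : ℕ} (A : Matrix (Fin n) (Fin n) ℝ) (r r' : Fin n → ℝ) :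
    r ⬝ᵥ A.mulVec r - r' ⬝ᵥ A.mulVec r'
      = (r - r') ⬝ᵥ A.mulVec r + r' ⬝ᵥ A.mulVec (r - r') := by
  rw [Matrix.mulVec_sub, dotProduct_sub, sub_dotProduct]
  ring

lemma lipschitz_combine {a b dp dq : ℝ} (hb0 : 0 ≤ b) (hdp0 : 0 ≤ dp) (hdq0 : 0 ≤ dq) :
    a * dp + b * dq ≤ (Real.sqrt 2 * max a b) * Real.sqrt (dq ^ 2 + dp ^ 2) := by
  set s : ℝ := Real.sqrt (dq ^ 2 + dp ^ 2) with hs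
  have hs0 : 0 ≤ s := Real.sqrt_nonneg _
  have hssq : s ^ 2 = dq ^ 2 + dp ^ 2 :=
    Real.sq_sqrt (add_nonneg (sq_nonneg _) (sq_nonneg _))
  have hmax0 : 0 ≤ max a b := le_trans hb0 (le_max_right a b)
  have h1 : a * dp + b * dq ≤ max a b * (dp + dq) := by
    have g1 := mul_le_mul_of_nonneg_right (le_max_left a b) hdp0
    have g2 := mul_le_mul_of_nonneg_right (le_max_right a b) hdq0
    calc a * dp + b * dq ≤ max a b * dp + max a b * dq := add_le_add g1 g2
      _ = max a b * (dp + dq) := by ring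
  have h2 : dp + dq ≤ Real.sqrt 2 * s := by
    have h2' : (dp + dq) ^ 2 ≤ 2 * s ^ 2 := by nlinarith [sq_nonneg (dp - dq), hssq]
    calc dp + dq = Real.sqrt ((dp + dq) ^ 2) :=
          (Real.sqrt_sq (add_nonneg hdp0 hdq0)).symm
      _ ≤ Real.sqrt (2 * s ^ 2) := Real.sqrt_le_sqrt h2'
      _ = Real.sqrt 2 * s := by
          rw [Real.sqrt_mul (by norm_num : (0:ℝ) ≤ 2), Real.sqrt_sq hs0]
  calc a * dp + b * dq ≤ max a b * (dp + dq) := h1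
    _ ≤ max a b * (Real.sqrt 2 * s) := mul_le_mul_of_nonneg_left h2 hmax0
    _ = (Real.sqrt 2 * max a b) * s := by ring

/-- **Uniform Lipschitz continuity of the Gaussian-process log-likelihood in the
joint parameter `(β, φ)`.**  If `C : U → Mₙ(ℝ)` is continuously differentiable
(entrywise) on an open convex `U ⊆ ℝˡ`, with `C(φ)` symmetric with eigenvalues
bounded below by `λ_min > 0` and `‖∂C/∂φⱼ(φ)‖_F ≤ M` on `U`, and
`‖C(φ) − C(φ')‖₂ ≤ L_φ‖φ − φ'‖₂` on `U`, then for `‖B‖₂ ≤ B*` and all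
`φ, φ' ∈ U`, `‖β‖₂ ≤ R`, `‖β'‖₂ ≤ R`:
`|ℓ(β,φ) − ℓ(β',φ')| ≤ (½ M √(nl)/λ_min + ½ 𝓛(Y)) · ‖(β,φ) − (β',φ')‖₂`. -/
theorem logLik_uniform_lipschitz {n L l : ℕ} (U : Set (Fin l → ℝ))
    (hUopen : IsOpen U) (hUconv : Convex ℝ U)
    (C : (Fin l → ℝ) → Matrix (Fin n) (Fin n) ℝ)
    (hC : ∀ i k, ContDiffOn ℝ 1 (fun φ => C φ i k) U)
    (lmin M Lphi : ℝ) (hl : 0 < lmin)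
    (hsymm : ∀ φ ∈ U, (C φ).IsSymm)
    (hpsd : ∀ φ ∈ U, (C φ - lmin • (1 : Matrix (Fin n) (Fin n) ℝ)).PosSemidef)
    (hM : ∀ φ ∈ U, ∀ j, frobNorm (partialDeriv C j φ) ≤ M)
    (hLip : ∀ φ ∈ U, ∀ φ' ∈ U, specNorm (C φ - C φ') ≤ Lphi * vnorm (φ - φ'))
    (Y : Fin n → ℝ) (B : Matrix (Fin n) (Fin L) ℝ) (Bstar R : ℝ)
    (hB : specNorm B ≤ Bstar) (hR : 0 < R)
    (φ φ' : Fin l → ℝ) (hφ : φ ∈ U) (hφ' : φ' ∈ U)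
    (β β' : Fin L → ℝ) (hβ : vnorm β ≤ R) (hβ' : vnorm β' ≤ R) :
    |logLik Y B C β φ - logLik Y B C β' φ'| ≤
      ((1 / 2) * (M * Real.sqrt ((n : ℝ) * l) / lmin) +
          (1 / 2) * stochLipCoeff Y Bstar R lmin Lphi) *
        Real.sqrt (vnorm (β - β') ^ 2 + vnorm (φ - φ') ^ 2) := by
  have hBstar0 : 0 ≤ Bstar := (specNorm_nonneg B).trans hB
  have hinvlmin : (0:ℝ) ≤ 1 / lmin := by positivity
  set r : Fin n → ℝ := Y - B.mulVec β with hr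
  set r' : Fin n → ℝ := Y - B.mulVec β' with hr'
  set ρ : ℝ := vnorm Y + Bstar * R with hρ
  have hvY0 := vnorm_nonneg Y
  have hρ0 : 0 ≤ ρ := add_nonneg hvY0 (mul_nonneg hBstar0 hR.le)
  have hrle : vnorm r ≤ ρ := by
    calc vnorm r ≤ vnorm Y + vnorm (B.mulVec β) := vnorm_sub_le _ _
      _ ≤ vnorm Y + Bstar * R := by
          have := (vnorm_mulVec_le B β).trans
            (mul_le_mul hB hβ (vnorm_nonneg β) hBstar0)
          linarith
  have hrle' : vnorm r' ≤ ρ := by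
    calc vnorm r' ≤ vnorm Y + vnorm (B.mulVec β') := vnorm_sub_le _ _
      _ ≤ vnorm Y + Bstar * R := by
          have := (vnorm_mulVec_le B β').trans
            (mul_le_mul hB hβ' (vnorm_nonneg β') hBstar0)
          linarith
  have hvβ0 := vnorm_nonneg (β - β')
  have hrr' : vnorm (r - r') ≤ Bstar * vnorm (β - β') := by
    have hrw : r - r' = B.mulVec (β' - β) := by
      funext i
      simp only [hr, hr', Matrix.mulVec_sub, Pi.sub_apply]
      ring
    rw [hrw]
    calc vnorm (B.mulVec (β' - β)) ≤ specNorm B * vnorm (β' - β) := vnorm_mulVec_le _ _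
      _ ≤ Bstar * vnorm (β - β') := by
          rw [vnorm_sub_comm β' β]
          exact mul_le_mul_of_nonneg_right hB (vnorm_nonneg _)
  have hvr0 := vnorm_nonneg r
  have hvr'0 := vnorm_nonneg r'
  have hCφpd := posDef_of hl (hpsd φ hφ) (hsymm φ hφ)
  have hCφ'pd := posDef_of hl (hpsd φ' hφ') (hsymm φ' hφ')
  have hinvφ : specNorm (C φ)⁻¹ ≤ 1 / lmin := specNorm_inv_le hl (hpsd φ hφ) (hsymm φ hφ)
  have hinvφ' : specNorm (C φ')⁻¹ ≤ 1 / lmin := specNorm_inv_le hl (hpsd φ' hφ') (hsymm φ' hφ')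
  have hLφv0 : (0:ℝ) ≤ Lphi * vnorm (φ - φ') :=
    (specNorm_nonneg (C φ - C φ')).trans (hLip φ hφ φ' hφ')
  -- Term A : inverse difference
  have hinvdiff : specNorm ((C φ)⁻¹ - (C φ')⁻¹) ≤ Lphi * vnorm (φ - φ') / lmin ^ 2 := by
    rw [inv_sub_inv_matrix hCφpd hCφ'pd]
    have h1 := specNorm_mul_le ((C φ)⁻¹ * (C φ' - C φ)) (C φ')⁻¹
    have h2 := specNorm_mul_le (C φ)⁻¹ (C φ' - C φ)
    have h3 : specNorm (C φ' - C φ) ≤ Lphi * vnorm (φ - φ') := by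
      rw [← vnorm_sub_comm φ' φ]
      exact hLip φ' hφ' φ hφ
    have hs2 := specNorm_nonneg (C φ' - C φ)
    have hs3 := specNorm_nonneg ((C φ')⁻¹)
    calc specNorm ((C φ)⁻¹ * (C φ' - C φ) * (C φ')⁻¹)
        ≤ specNorm ((C φ)⁻¹ * (C φ' - C φ)) * specNorm (C φ')⁻¹ := h1
      _ ≤ (specNorm (C φ)⁻¹ * specNorm (C φ' - C φ)) * specNorm (C φ')⁻¹ :=
          mul_le_mul_of_nonneg_right h2 hs3
      _ ≤ ((1 / lmin) * (Lphi * vnorm (φ - φ'))) * (1 / lmin) := by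
          have hstep : specNorm (C φ)⁻¹ * specNorm (C φ' - C φ)
              ≤ (1 / lmin) * (Lphi * vnorm (φ - φ')) :=
            mul_le_mul hinvφ h3 hs2 hinvlmin
          exact mul_le_mul hstep hinvφ' hs3
            (mul_nonneg hinvlmin hLφv0)
      _ = Lphi * vnorm (φ - φ') * ((lmin * lmin)⁻¹) := by
          rw [one_div, mul_inv]
          ring
      _ = Lphi * vnorm (φ - φ') / lmin ^ 2 := by rw [sq, div_eq_mul_inv]
  have hinvdiff0 : (0:ℝ) ≤ Lphi * vnorm (φ - φ') / lmin ^ 2 :=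
    div_nonneg hLφv0 (sq_nonneg _)
  have htermA : |r ⬝ᵥ ((C φ)⁻¹ - (C φ')⁻¹).mulVec r|
      ≤ Lphi / lmin ^ 2 * (vnorm Y ^ 2 + 2 * Bstar * R * vnorm Y + (Bstar * R) ^ 2)
          * vnorm (φ - φ') := by
    calc |r ⬝ᵥ ((C φ)⁻¹ - (C φ')⁻¹).mulVec r|
        ≤ specNorm ((C φ)⁻¹ - (C φ')⁻¹) * vnorm r * vnorm r := quadform_abs_le _ _ _
      _ ≤ (Lphi * vnorm (φ - φ') / lmin ^ 2) * ρ * ρ := by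
          have h1 : specNorm ((C φ)⁻¹ - (C φ')⁻¹) * vnorm r
              ≤ (Lphi * vnorm (φ - φ') / lmin ^ 2) * ρ :=
            mul_le_mul hinvdiff hrle hvr0 hinvdiff0
          exact mul_le_mul h1 hrle hvr0 (mul_nonneg hinvdiff0 hρ0)
      _ = Lphi / lmin ^ 2 * (vnorm Y ^ 2 + 2 * Bstar * R * vnorm Y + (Bstar * R) ^ 2)
            * vnorm (φ - φ') := by rw [hρ]; ring
  -- Term B
  have htermB : |r ⬝ᵥ (C φ')⁻¹.mulVec r - r' ⬝ᵥ (C φ')⁻¹.mulVec r'|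
      ≤ Bstar / lmin * (2 * vnorm Y + 2 * Bstar * R) * vnorm (β - β') := by
    rw [quad_split2]
    have h1 : |(r - r') ⬝ᵥ (C φ')⁻¹.mulVec r| ≤ (1 / lmin) * (Bstar * vnorm (β - β')) * ρ := by
      calc |(r - r') ⬝ᵥ (C φ')⁻¹.mulVec r|
          ≤ specNorm (C φ')⁻¹ * vnorm (r - r') * vnorm r := quadform_abs_le _ _ _
        _ ≤ (1 / lmin) * (Bstar * vnorm (β - β')) * ρ := by
            have ha : specNorm (C φ')⁻¹ * vnorm (r - r')
                ≤ (1 / lmin) * (Bstar * vnorm (β - β')) :=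
              mul_le_mul hinvφ' hrr' (vnorm_nonneg _) hinvlmin
            exact mul_le_mul ha hrle hvr0
              (mul_nonneg hinvlmin (mul_nonneg hBstar0 hvβ0))
    have h2 : |r' ⬝ᵥ (C φ')⁻¹.mulVec (r - r')| ≤ (1 / lmin) * ρ * (Bstar * vnorm (β - β')) := by
      calc |r' ⬝ᵥ (C φ')⁻¹.mulVec (r - r')|
          ≤ specNorm (C φ')⁻¹ * vnorm r' * vnorm (r - r') := quadform_abs_le _ _ _
        _ ≤ (1 / lmin) * ρ * (Bstar * vnorm (β - β')) := by
            have ha : specNorm (C φ')⁻¹ * vnorm r' ≤ (1 / lmin) * ρ :=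
              mul_le_mul hinvφ' hrle' hvr'0 hinvlmin
            exact mul_le_mul ha hrr' (vnorm_nonneg _)
              (mul_nonneg hinvlmin hρ0)
    calc |(r - r') ⬝ᵥ (C φ')⁻¹.mulVec r + r' ⬝ᵥ (C φ')⁻¹.mulVec (r - r')|
        ≤ |(r - r') ⬝ᵥ (C φ')⁻¹.mulVec r| + |r' ⬝ᵥ (C φ')⁻¹.mulVec (r - r')| := abs_add_le _ _
      _ ≤ (1 / lmin) * (Bstar * vnorm (β - β')) * ρ + (1 / lmin) * ρ * (Bstar * vnorm (β - β'))
          := add_le_add h1 h2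
      _ = Bstar / lmin * (2 * ρ) * vnorm (β - β') := by ring
      _ = Bstar / lmin * (2 * vnorm Y + 2 * Bstar * R) * vnorm (β - β') := by rw [hρ]; ring
  -- log det part
  have hlogdet := logdet_diff_bound U hUopen hUconv C hC hl hsymm hpsd hM hφ hφ'
  -- abbreviations
  set a : ℝ := Lphi / lmin ^ 2 * (vnorm Y ^ 2 + 2 * Bstar * R * vnorm Y + (Bstar * R) ^ 2)
    with ha
  set b : ℝ := Bstar / lmin * (2 * vnorm Y + 2 * Bstar * R) with hb
  have hb0 : 0 ≤ b := by
    have h2Y : (0:ℝ) ≤ 2 * vnorm Y + 2 * Bstar * R := by positivity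
    exact mul_nonneg (div_nonneg hBstar0 hl.le) h2Y
  set dφ : ℝ := vnorm (φ - φ') with hdφ
  set dβ : ℝ := vnorm (β - β') with hdβ
  have hdφ0 : 0 ≤ dφ := vnorm_nonneg _
  have hdβ0 : 0 ≤ dβ := vnorm_nonneg _
  set s : ℝ := Real.sqrt (dβ ^ 2 + dφ ^ 2) with hs
  have hs0 : 0 ≤ s := Real.sqrt_nonneg _
  have hssq : s ^ 2 = dβ ^ 2 + dφ ^ 2 :=
    Real.sq_sqrt (add_nonneg (sq_nonneg _) (sq_nonneg _))
  have hdφs : dφ ≤ s := by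
    rw [show dφ = Real.sqrt (dφ ^ 2) from (Real.sqrt_sq hdφ0).symm, hs]
    exact Real.sqrt_le_sqrt (by linarith [sq_nonneg dβ])
  have hdβs : dβ ≤ s := by
    rw [show dβ = Real.sqrt (dβ ^ 2) from (Real.sqrt_sq hdβ0).symm, hs]
    exact Real.sqrt_le_sqrt (by linarith [sq_nonneg dφ])
  have hsum : a * dφ + b * dβ ≤ stochLipCoeff Y Bstar R lmin Lphi * s := by
    calc a * dφ + b * dβ ≤ (Real.sqrt 2 * max a b) * Real.sqrt (dβ ^ 2 + dφ ^ 2) :=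
          lipschitz_combine hb0 hdφ0 hdβ0
      _ = stochLipCoeff Y Bstar R lmin Lphi * s := by
          rw [hs]
          unfold stochLipCoeff
          rw [ha, hb]
  have hK1 : 0 ≤ M * Real.sqrt ((n : ℝ) * l) / lmin := by
    rcases Nat.eq_zero_or_pos l with h0 | hlpos
    · subst h0; simp
    rcases Nat.eq_zero_or_pos n with h0 | hnpos
    · subst h0; simp
    have hM0 : 0 ≤ M := le_trans (frobNorm_nonneg _) (hM φ hφ ⟨0, hlpos⟩)
    positivity
  -- assemble
  have hexpand : logLik Y B C β φ - logLik Y B C β' φ'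
      = (-(1/2)) * (Real.log (C φ).det - Real.log (C φ').det)
        + (-(1/2)) * (r ⬝ᵥ ((C φ)⁻¹ - (C φ')⁻¹).mulVec r)
        + (-(1/2)) * (r ⬝ᵥ (C φ')⁻¹.mulVec r - r' ⬝ᵥ (C φ')⁻¹.mulVec r') := by
    rw [logLik, logLik, ← hr, ← hr']
    have hsplitA : r ⬝ᵥ ((C φ)⁻¹ - (C φ')⁻¹).mulVec r
        = r ⬝ᵥ (C φ)⁻¹.mulVec r - r ⬝ᵥ (C φ')⁻¹.mulVec r := by
      rw [Matrix.sub_mulVec, dotProduct_sub]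
    rw [hsplitA]
    ring
  have habs : |logLik Y B C β φ - logLik Y B C β' φ'|
      ≤ (1/2) * |Real.log (C φ).det - Real.log (C φ').det|
        + (1/2) * |r ⬝ᵥ ((C φ)⁻¹ - (C φ')⁻¹).mulVec r|
        + (1/2) * |r ⬝ᵥ (C φ')⁻¹.mulVec r - r' ⬝ᵥ (C φ')⁻¹.mulVec r'| := by
    rw [hexpand]
    refine (abs_add_three _ _ _).trans ?_
    simp only [abs_mul, abs_neg, abs_of_pos (by norm_num : (0:ℝ) < 1/2)]
    exact le_refl _
  calc |logLik Y B C β φ - logLik Y B C β' φ'|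
      ≤ (1/2) * |Real.log (C φ).det - Real.log (C φ').det|
        + (1/2) * |r ⬝ᵥ ((C φ)⁻¹ - (C φ')⁻¹).mulVec r|
        + (1/2) * |r ⬝ᵥ (C φ')⁻¹.mulVec r - r' ⬝ᵥ (C φ')⁻¹.mulVec r'| := habs
    _ ≤ (1/2) * (M * Real.sqrt ((n : ℝ) * l) / lmin * dφ)
        + (1/2) * (a * dφ) + (1/2) * (b * dβ) := by
        have half : (0:ℝ) ≤ 1/2 := by norm_num
        exact add_le_add (add_le_add (mul_le_mul_of_nonneg_left hlogdet half)
          (mul_le_mul_of_nonneg_left htermA half)) (mul_le_mul_of_nonneg_left htermB half)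
    _ = (1/2) * (M * Real.sqrt ((n : ℝ) * l) / lmin * dφ)
        + (1/2) * (a * dφ + b * dβ) := by ring
    _ ≤ (1/2) * (M * Real.sqrt ((n : ℝ) * l) / lmin * s)
        + (1/2) * (stochLipCoeff Y Bstar R lmin Lphi * s) := by
        have h1 : M * Real.sqrt ((n : ℝ) * l) / lmin * dφ
            ≤ M * Real.sqrt ((n : ℝ) * l) / lmin * s :=
          mul_le_mul_of_nonneg_left hdφs hK1
        have half : (0:ℝ) ≤ 1/2 := by norm_num
        exact add_le_add (mul_le_mul_of_nonneg_left h1 half)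
          (mul_le_mul_of_nonneg_left hsum half)
    _ = ((1 / 2) * (M * Real.sqrt ((n : ℝ) * l) / lmin) +
          (1 / 2) * stochLipCoeff Y Bstar R lmin Lphi) * s := by ring
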